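/- Consider the flat-Earth case c = 0 with constants a>0, b>0, g0>0. Let (x(·), p(·)) : [0,t_f] → ℝ⁴ × ℝ⁴ be a differentiable solution of the MTTP state and adjoint equations with c = 0, for some measurable control u, where x3(·) is continuous, p1 and p2 are constant, cos γ_f ≠ 0 and p1 = −p2 tan γ_f. Then for all t ∈ [0,t_f], p4(t) = p4(0) − p3(0)·t + (a p2/cos γ_f) ∫₀ᵗ ∫₀ˢ cos(x3(τ) − γ_f) dτ ds. -/

import Mathlib

open intervalIntegral MeasureTheory

/-- If two functions have the same derivative at every point of `Icc 0 tf` and agree at `0`,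
they agree on `Icc 0 tf`. -/
lemma eq_on_Icc_of_hasDerivAt {tf : ℝ} {f g d : ℝ → ℝ}
    (hf : ∀ t ∈ Set.Icc 0 tf, HasDerivAt f (d t) t)
    (hg : ∀ t ∈ Set.Icc 0 tf, HasDerivAt g (d t) t)
    (h0 : f 0 = g 0) : ∀ t ∈ Set.Icc 0 tf, f t = g t := by
  apply eq_of_has_deriv_right_eq (f' := d)
  · intro x hx
    exact (hf x (Set.mem_Icc_of_Ico hx)).hasDerivWithinAt
  · intro x hx
    exact (hg x (Set.mem_Icc_of_Ico hx)).hasDerivWithinAt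
  · intro x hx
    exact (hf x hx).continuousAt.continuousWithinAt
  · intro x hx
    exact (hg x hx).continuousAt.continuousWithinAt
  · exact h0

/-- Flat-Earth case (c = 0): integral representation of p4. -/
theorem stmt18
(a b g0 : ℝ) (ha : 0 < a) (hb : 0 < b) (hg0 : 0 < g0)
    (tf : ℝ) (htf : 0 < tf)
    (x1 x2 x3 x4 p1 p2 p3 p4 u : ℝ → ℝ)
    (hu_meas : Measurable u)
    (hu : ∀ t ∈ Set.Icc 0 tf, u t ∈ Set.Icc (-1 : ℝ) 1)
    (hx1 : ∀ t ∈ Set.Icc 0 tf, HasDerivAt x1 (a * Real.cos (x3 t)) t)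
    (hx2 : ∀ t ∈ Set.Icc 0 tf, HasDerivAt x2 (a * Real.sin (x3 t) - g0) t)
    (hx3 : ∀ t ∈ Set.Icc 0 tf, HasDerivAt x3 (x4 t) t)
    (hx4 : ∀ t ∈ Set.Icc 0 tf, HasDerivAt x4 (b * u t) t)
    (hp1 : ∀ t ∈ Set.Icc 0 tf, HasDerivAt p1 0 t)
    (hp2 : ∀ t ∈ Set.Icc 0 tf, HasDerivAt p2 0 t)
    (hp3 : ∀ t ∈ Set.Icc 0 tf,
      HasDerivAt p3 (a * (p1 t * Real.sin (x3 t) - p2 t * Real.cos (x3 t))) t)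
    (hp4 : ∀ t ∈ Set.Icc 0 tf, HasDerivAt p4 (-(p3 t)) t)
    (γf : ℝ) (hγf : Real.cos γf ≠ 0)
    (hx3cont : Continuous x3)
    (hp1const : ∀ t ∈ Set.Icc 0 tf, p1 t = p1 0)
    (hp2const : ∀ t ∈ Set.Icc 0 tf, p2 t = p2 0)
    (hrel : ∀ t ∈ Set.Icc 0 tf, p1 t = -(p2 t) * Real.tan γf) :
    ∀ t ∈ Set.Icc 0 tf,
      p4 t = p4 0 - p3 0 * t
        + (a * p2 0 / Real.cos γf) *
            ∫ s in (0 : ℝ)..t, ∫ τ in (0 : ℝ)..s, Real.cos (x3 τ - γf) := by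
  set K : ℝ := a * p2 0 / Real.cos γf with hK
  have hcont : Continuous fun τ => Real.cos (x3 τ - γf) :=
    (Real.continuous_cos.comp (hx3cont.sub continuous_const))
  set F : ℝ → ℝ := fun s => ∫ τ in (0 : ℝ)..s, Real.cos (x3 τ - γf) with hF
  have hFderiv : ∀ t : ℝ, HasDerivAt F (Real.cos (x3 t - γf)) t := by
    intro t
    exact intervalIntegral.integral_hasDerivAt_right
      (hcont.intervalIntegrable 0 t)
      (hcont.stronglyMeasurableAtFilter _ _)
      hcont.continuousAt
  have hFcont : Continuous F := by
    have : Differentiable ℝ F := fun t => (hFderiv t).differentiableAt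
    exact this.continuous
  -- Step 1: p3 t = p3 0 - K * F t on Icc
  have hp3eq : ∀ t ∈ Set.Icc 0 tf, p3 t = p3 0 - K * F t := by
    apply eq_on_Icc_of_hasDerivAt (d := fun t => -(K * Real.cos (x3 t - γf)))
    · intro t ht
      have h := hp3 t ht
      have hrw : a * (p1 t * Real.sin (x3 t) - p2 t * Real.cos (x3 t))
          = -(K * Real.cos (x3 t - γf)) := by
        rw [hrel t ht, hp2const t ht, hK, Real.cos_sub, Real.tan_eq_sin_div_cos]
        field_simp
        ring
      rwa [hrw] at h
    · intro t ht
      have := ((hFderiv t).const_mul K).neg.const_add (p3 0)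
      simpa [sub_eq_add_neg] using this
    · simp [hF, intervalIntegral.integral_same]
  -- Step 2
  apply eq_on_Icc_of_hasDerivAt (d := fun t => -(p3 t))
  · exact hp4
  · intro t ht
    have hFint : ∀ s : ℝ, HasDerivAt (fun r => ∫ σ in (0:ℝ)..r, F σ) (F s) s := by
      intro s
      exact intervalIntegral.integral_hasDerivAt_right
        (hFcont.intervalIntegrable 0 s)
        (hFcont.stronglyMeasurableAtFilter _ _)
        hFcont.continuousAt
    have h1 : HasDerivAt (fun r => p4 0 - p3 0 * r + K * ∫ s in (0:ℝ)..r, F s)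
        (-(p3 0) + K * F t) t := by
      have := (((hasDerivAt_id t).const_mul (p3 0)).const_sub (p4 0)).add
        ((hFint t).const_mul K)
      simpa [Pi.add_def] using this
    have heq : -(p3 t) = -(p3 0) + K * F t := by
      rw [hp3eq t ht]; ring
    rw [heq]
    exact h1
  · simp [hF, intervalIntegral.integral_same]
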